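/- Fix real λ and a positive integer m with 2λ − m > 0, set 2λⱼ = 2λ − m + 2j. The linear maps Γⱼ: A^{(λⱼ)}(𝔻) → Hol(𝔻, ℂ^{m+1}) defined by (Γⱼf)_ℓ = binom(ℓ,j)·(1/(2λⱼ)_{ℓ−j})·f^{(ℓ−j)} for ℓ ≥ j and 0 for ℓ < j, have images whose algebraic sum is direct: if Σⱼ Γⱼfⱼ = 0 with fⱼ holomorphic, then all fⱼ = 0. -/

import Mathlib

open Metric Finset

/-- Fix `λ` real and `m ≥ 1` with `2λ - m > 0` and set `2λⱼ = 2λ - m + 2j`.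
The maps `Γⱼ` sending a holomorphic function `f` on the disc to the `ℂ^{m+1}`-valued
function with `ℓ`-th component `C(ℓ,j)·(2λⱼ)_{ℓ-j}⁻¹·f^{(ℓ-j)}` for `ℓ ≥ j` (and `0` for
`ℓ < j`) have images whose algebraic sum is direct: if `Σⱼ Γⱼ fⱼ = 0` on the disc with
all `fⱼ` holomorphic on the disc, then every `fⱼ` vanishes on the disc. -/
theorem gamma_images_sum_direct
    (m : ℕ) (hm : 0 < m) (lam : ℝ) (hlam : (m : ℝ) < 2 * lam)
    (f : Fin (m + 1) → ℂ → ℂ)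
    (hf : ∀ j, DifferentiableOn ℂ (f j) (ball (0:ℂ) 1))
    (hsum : ∀ z ∈ ball (0:ℂ) 1, ∀ ℓ : Fin (m + 1),
      ∑ j : Fin (m + 1),
        (if (j : ℕ) ≤ (ℓ : ℕ) then
            ((ℓ : ℕ).choose (j : ℕ) : ℂ)
              * (((ascPochhammer ℝ ((ℓ : ℕ) - (j : ℕ))).eval
                    (2 * lam - m + 2 * (j : ℕ)) : ℝ) : ℂ)⁻¹
              * iteratedDerivWithin ((ℓ : ℕ) - (j : ℕ)) (f j) (ball (0:ℂ) 1) z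
          else 0) = 0) :
    ∀ j : Fin (m + 1), ∀ z ∈ ball (0:ℂ) 1, f j z = 0 := by

  have hball : UniqueDiffOn ℂ (ball (0:ℂ) 1) := isOpen_ball.uniqueDiffOn
  have key : ∀ n : ℕ, ∀ hn : n < m + 1, ∀ z ∈ ball (0:ℂ) 1, f ⟨n, hn⟩ z = 0 := by
    intro n
    induction n using Nat.strong_induction_on with
    | _ n IH =>
      intro hn z hz
      have h := hsum z hz ⟨n, hn⟩
      have hterm : ∀ j : Fin (m + 1),
          (if (j : ℕ) ≤ n then
            ((n).choose (j : ℕ) : ℂ)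
              * (((ascPochhammer ℝ (n - (j : ℕ))).eval
                    (2 * lam - m + 2 * (j : ℕ)) : ℝ) : ℂ)⁻¹
              * iteratedDerivWithin (n - (j : ℕ)) (f j) (ball (0:ℂ) 1) z
          else 0) = if j = ⟨n, hn⟩ then f ⟨n, hn⟩ z else 0 := by
        intro j
        rcases lt_trichotomy (j : ℕ) n with hlt | heq | hgt
        · have hjeq : f j = fun w => f j w := rfl
          have hzero : Set.EqOn (f j) (fun _ => (0:ℂ)) (ball (0:ℂ) 1) := by
            intro w hw
            have := IH (j : ℕ) hlt j.isLt w hw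
            simpa using this
          have hder : iteratedDerivWithin (n - (j : ℕ)) (f j) (ball (0:ℂ) 1) z = 0 := by
            have := iteratedDerivWithin_congr (n := n - (j : ℕ)) hzero hz
            rw [this]
            simp [iteratedDerivWithin, iteratedFDerivWithin_zero_fun]
          rw [if_pos hlt.le, hder, if_neg (by simp [Fin.ext_iff, hlt.ne])]
          ring
        · have hje : j = ⟨n, hn⟩ := Fin.ext heq
          subst hje
          simp [heq]
        · rw [if_neg (not_le.mpr hgt), if_neg (by simp [Fin.ext_iff]; omega)]
      rw [Finset.sum_congr rfl (fun j _ => hterm j), Finset.sum_ite_eq' _ _ _] at h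
      simpa using h
  intro j z hz
  have := key (j : ℕ) j.isLt z hz
  simpa using this
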